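/- Let F_q be a finite field, d ≥ 2, k ≥ 0, and r ∈ F_q nonzero with r = s^d for some s ∈ F_q. If E ⊆ F_q^d satisfies |E|² ≥ (k+1)·q^d, then there exist g ∈ SL_d(F_q) and sequences of distinct points z_1,…,z_{k+1} with z_i ∈ (s·E) ∩ (g·E); consequently there are tuples (x_i), (y_i) in E^{k+1} such that det(x_{i_1},…,x_{i_d}) = r · det(y_{i_1},…,y_{i_d}) for every choice of d indices i_1,…,i_d from {1,…,k+1}. -/

import Mathlib

open Matrix Finset

section Aux
variable {F : Type*} [Field F] [Fintype F] [DecidableEq F] {d : ℕ}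

private lemma DSC.coe_inv_mulVec (g : Matrix.SpecialLinearGroup (Fin d) F) (v : Fin d → F) :
    (↑(g⁻¹) : Matrix (Fin d) (Fin d) F).mulVec ((g : Matrix (Fin d) (Fin d) F).mulVec v) = v := by
  rw [Matrix.mulVec_mulVec, ← Matrix.SpecialLinearGroup.coe_mul, inv_mul_cancel,
    Matrix.SpecialLinearGroup.coe_one, Matrix.one_mulVec]

private lemma DSC.mulVec_inj (g : Matrix.SpecialLinearGroup (Fin d) F) :
    Function.Injective ((g : Matrix (Fin d) (Fin d) F).mulVec) := by
  intro x y h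
  have := congrArg ((↑(g⁻¹) : Matrix (Fin d) (Fin d) F).mulVec) h
  rwa [DSC.coe_inv_mulVec, DSC.coe_inv_mulVec] at this

private lemma DSC.mulVec_ne_zero (g : Matrix.SpecialLinearGroup (Fin d) F) (v : Fin d → F)
    (hv : v ≠ 0) : (g : Matrix (Fin d) (Fin d) F).mulVec v ≠ 0 := by
  intro h
  exact hv (DSC.mulVec_inj g (h.trans (Matrix.mulVec_zero _).symm))

private lemma DSC.lemA (hd : 2 ≤ d) (b : Fin d → F) (hb : b ≠ 0) :
    ∃ g : Matrix.SpecialLinearGroup (Fin d) F,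
      (g : Matrix (Fin d) (Fin d) F).mulVec (Pi.single (⟨0, by omega⟩ : Fin d) 1) = b := by
  set i0 : Fin d := ⟨0, by omega⟩
  set i1 : Fin d := ⟨1, by omega⟩
  have hi01 : i0 ≠ i1 := by simp [i0, i1, Fin.ext_iff]
  have hli : LinearIndepOn F id ({b} : Set (Fin d → F)) :=
    LinearIndepOn.singleton hb
  set t := hli.extend (Set.subset_univ _) with ht
  let B' : Module.Basis t F (Fin d → F) := Module.Basis.extend hli
  have hbt : b ∈ t := hli.subset_extend _ (Set.mem_singleton b)
  have : Fintype t := FiniteDimensional.fintypeBasisIndex B'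
  have hcard : Fintype.card t = d := by
    rw [← Module.finrank_eq_card_basis B', Module.finrank_fintype_fun_eq_card,
      Fintype.card_fin]
  let e0 : t ≃ Fin d := Fintype.equivFinOfCardEq hcard
  let e : t ≃ Fin d := e0.trans (Equiv.swap (e0 ⟨b, hbt⟩) i0)
  let B : Module.Basis (Fin d) F (Fin d → F) := B'.reindex e
  have hB0 : B i0 = b := by
    have : e ⟨b, hbt⟩ = i0 := by simp [e]
    rw [show i0 = e ⟨b, hbt⟩ from this.symm, Module.Basis.reindex_apply, Equiv.symm_apply_apply]
    exact Module.Basis.extend_apply_self hli _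
  let M : Matrix (Fin d) (Fin d) F := (Pi.basisFun F (Fin d)).toMatrix B
  have hMcol : ∀ i j, M i j = B j i := by
    intro i j
    simp [M, Module.Basis.toMatrix_apply]
  have : Invertible M := (Pi.basisFun F (Fin d)).invertibleToMatrix B
  have hu : IsUnit M.det := Matrix.isUnit_det_of_invertible M
  set u := M.det with hudef
  have hu0 : u ≠ 0 := hu.ne_zero
  let D : Matrix (Fin d) (Fin d) F := Matrix.diagonal (fun i => if i = i1 then u⁻¹ else 1)
  have hdetD : D.det = u⁻¹ := by
    rw [Matrix.det_diagonal]
    simp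
  have hdet : (M * D).det = 1 := by
    rw [Matrix.det_mul, hdetD, mul_inv_cancel₀ hu0]
  refine ⟨⟨M * D, hdet⟩, ?_⟩
  show (M * D).mulVec (Pi.single i0 1) = b
  rw [← Matrix.mulVec_mulVec]
  have hD : D.mulVec (Pi.single i0 1) = Pi.single i0 1 := by
    rw [Matrix.diagonal_mulVec_single]
    rw [if_neg hi01, one_mul]
  rw [hD, Matrix.mulVec_single_one]
  funext i
  simp [Matrix.transpose_apply, hMcol, hB0]

private lemma DSC.SL_trans (hd : 2 ≤ d) (a b : Fin d → F) (ha : a ≠ 0) (hb : b ≠ 0) :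
    ∃ g : Matrix.SpecialLinearGroup (Fin d) F,
      (g : Matrix (Fin d) (Fin d) F).mulVec b = a := by
  obtain ⟨ga, hga⟩ := DSC.lemA hd a ha
  obtain ⟨gb, hgb⟩ := DSC.lemA hd b hb
  refine ⟨ga * gb⁻¹, ?_⟩
  have h1 : (↑(gb⁻¹) : Matrix (Fin d) (Fin d) F).mulVec b
      = Pi.single (⟨0, by omega⟩ : Fin d) 1 := by
    rw [← hgb, DSC.coe_inv_mulVec]
  rw [Matrix.SpecialLinearGroup.coe_mul, ← Matrix.mulVec_mulVec, h1, hga]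

/-- number of `g ∈ SL_d(F)` with `g b = a` -/
private def DSC.fib (a b : Fin d → F) : ℕ :=
  (univ.filter fun g : Matrix.SpecialLinearGroup (Fin d) F =>
    (g : Matrix (Fin d) (Fin d) F).mulVec b = a).card

private lemma DSC.fib_zero_right (a : Fin d → F) (ha : a ≠ 0) : DSC.fib a 0 = 0 := by
  rw [DSC.fib, Finset.card_eq_zero, Finset.filter_eq_empty_iff]
  intro g _
  rw [Matrix.mulVec_zero]
  exact fun h => ha h.symm

private lemma DSC.fib_zero_left (b : Fin d → F) (hb : b ≠ 0) : DSC.fib 0 b = 0 := by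
  rw [DSC.fib, Finset.card_eq_zero, Finset.filter_eq_empty_iff]
  intro g _
  exact DSC.mulVec_ne_zero g b hb

private lemma DSC.fib_zero_zero :
    DSC.fib (0 : Fin d → F) 0 = Fintype.card (Matrix.SpecialLinearGroup (Fin d) F) := by
  rw [DSC.fib]
  rw [Finset.filter_true_of_mem fun g _ => Matrix.mulVec_zero _, Finset.card_univ]

private lemma DSC.fib_congr (hd : 2 ≤ d) {a b a' b' : Fin d → F} (ha : a ≠ 0) (hb : b ≠ 0)
    (ha' : a' ≠ 0) (hb' : b' ≠ 0) : DSC.fib a b = DSC.fib a' b' := by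
  obtain ⟨u, hu⟩ := DSC.SL_trans hd a' a ha' ha
  obtain ⟨v, hv⟩ := DSC.SL_trans hd b b' hb hb'
  rw [DSC.fib, DSC.fib]
  apply Finset.card_bij (fun g _ => u * g * v)
  · intro g hg
    simp only [Finset.mem_filter, Finset.mem_univ, true_and] at hg ⊢
    rw [Matrix.SpecialLinearGroup.coe_mul, Matrix.SpecialLinearGroup.coe_mul,
      ← Matrix.mulVec_mulVec, ← Matrix.mulVec_mulVec, hv, hg, hu]
  · intro g1 _ g2 _ h
    have := congrArg (fun w => u⁻¹ * w * v⁻¹) h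
    simpa [mul_assoc] using this
  · intro g' hg'
    simp only [Finset.mem_filter, Finset.mem_univ, true_and] at hg'
    refine ⟨u⁻¹ * g' * v⁻¹, ?_, by group⟩
    simp only [Finset.mem_filter, Finset.mem_univ, true_and]
    have hvb : (↑(v⁻¹) : Matrix (Fin d) (Fin d) F).mulVec b = b' := by
      rw [← hv, DSC.coe_inv_mulVec]
    have hua : (↑(u⁻¹) : Matrix (Fin d) (Fin d) F).mulVec a' = a := by
      rw [← hu, DSC.coe_inv_mulVec]
    rw [Matrix.SpecialLinearGroup.coe_mul, Matrix.SpecialLinearGroup.coe_mul,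
      ← Matrix.mulVec_mulVec, ← Matrix.mulVec_mulVec, hvb, hg', hua]

private lemma DSC.card_SL_eq (hd : 2 ≤ d) {a b : Fin d → F} (ha : a ≠ 0) (hb : b ≠ 0) :
    Fintype.card (Matrix.SpecialLinearGroup (Fin d) F)
      = (Fintype.card (Fin d → F) - 1) * DSC.fib a b := by
  have h1 : Fintype.card (Matrix.SpecialLinearGroup (Fin d) F)
      = ∑ v : Fin d → F, DSC.fib v b := by
    rw [← Finset.card_univ]
    exact Finset.card_eq_sum_card_fiberwise
      (f := fun g : Matrix.SpecialLinearGroup (Fin d) F =>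
        (g : Matrix (Fin d) (Fin d) F).mulVec b) (fun x _ => Finset.mem_univ _)
  rw [h1, ← Finset.add_sum_erase _ _ (Finset.mem_univ (0 : Fin d → F)),
    DSC.fib_zero_left b hb, zero_add]
  rw [Finset.sum_congr rfl (fun v hv => DSC.fib_congr hd ?_ hb ha hb), Finset.sum_const,
    Finset.card_erase_of_mem (Finset.mem_univ _), Finset.card_univ, smul_eq_mul]
  exact (Finset.mem_erase.mp hv).1

end Aux

theorem det_similar_configurations (F : Type*) [Field F] [Fintype F] [DecidableEq F]
    (d k : ℕ) (hd : 2 ≤ d) (s r : F) (hr : r = s ^ d) (hr0 : r ≠ 0)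
    (E : Finset (Fin d → F)) (hE : (k + 1) * Fintype.card F ^ d ≤ E.card ^ 2) :
    ∃ g : Matrix.SpecialLinearGroup (Fin d) F, ∃ z : Fin (k + 1) → (Fin d → F),
      Function.Injective z ∧
      (∀ i, z i ∈ (E.image (fun x => s • x)) ∩
        (E.image (fun x => (g : Matrix (Fin d) (Fin d) F).mulVec x))) ∧
      ∃ x y : Fin (k + 1) → (Fin d → F),
        (∀ i, x i ∈ E) ∧ (∀ i, y i ∈ E) ∧
        ∀ idx : Fin d → Fin (k + 1),
          Matrix.det (Matrix.of fun a b => x (idx b) a)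
            = r * Matrix.det (Matrix.of fun a b => y (idx b) a) := by
  classical
  have hs : s ≠ 0 := by
    intro h
    exact hr0 (by rw [hr, h, zero_pow (by omega)])
  set Q := Fintype.card F ^ d with hQdef
  have hQV : Fintype.card (Fin d → F) = Q := by
    rw [Fintype.card_fun, Fintype.card_fin]
  set e0 : Fin d → F := Pi.single (⟨0, by omega⟩ : Fin d) 1 with he0
  have he0ne : e0 ≠ 0 := by
    intro h
    have := congrFun h ⟨0, by omega⟩
    simp [e0] at this
  set c := DSC.fib e0 e0 with hcdef
  set G := Matrix.SpecialLinearGroup (Fin d) F with hGdef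
  have hcard : Fintype.card G = (Q - 1) * c := by
    rw [← hQV]
    exact DSC.card_SL_eq hd he0ne he0ne
  have hG1 : 1 ≤ Fintype.card G := Fintype.card_pos
  have hQ1 : 1 ≤ Q := Nat.one_le_iff_ne_zero.mpr (pow_ne_zero _ Fintype.card_ne_zero)
  have hc1 : 1 ≤ c := by
    rcases Nat.eq_zero_or_pos c with h | h
    · rw [h, mul_zero] at hcard; omega
    · exact h
  set S : G → Finset (Fin d → F) := fun g => (E.image (fun x => s • x)) ∩
    (E.image (fun x => (g : Matrix (Fin d) (Fin d) F).mulVec x)) with hSdef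
  -- counting
  have hcount : ∀ g : G,
      ((E ×ˢ E).filter fun p => (g : Matrix (Fin d) (Fin d) F).mulVec p.2 = s • p.1).card
        = (S g).card := by
    intro g
    apply Finset.card_bij (fun p _ => s • p.1)
    · intro p hp
      simp only [Finset.mem_filter, Finset.mem_product] at hp
      obtain ⟨⟨h1, h2⟩, h3⟩ := hp
      simp only [S, Finset.mem_inter, Finset.mem_image]
      exact ⟨⟨p.1, h1, rfl⟩, ⟨p.2, h2, h3⟩⟩
    · intro p1 hp1 p2 hp2 h
      simp only [Finset.mem_filter, Finset.mem_product] at hp1 hp2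
      have h1 : p1.1 = p2.1 := smul_right_injective _ hs h
      have h2 : p1.2 = p2.2 := DSC.mulVec_inj g (by rw [hp1.2, hp2.2, h1])
      exact Prod.ext h1 h2
    · intro v hv
      simp only [S, Finset.mem_inter, Finset.mem_image] at hv
      obtain ⟨⟨x, hx, hxv⟩, ⟨y, hy, hyv⟩⟩ := hv
      exact ⟨(x, y), Finset.mem_filter.mpr ⟨Finset.mem_product.mpr ⟨hx, hy⟩,
        by rw [hyv, hxv]⟩, hxv⟩
  have hsum : ∑ g : G, (S g).card = ∑ p ∈ E ×ˢ E, DSC.fib (s • p.1) p.2 := by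
    have h1 : ∀ g : G, (S g).card = ∑ p ∈ E ×ˢ E,
        if (g : Matrix (Fin d) (Fin d) F).mulVec p.2 = s • p.1 then 1 else 0 := by
      intro g
      rw [← hcount g, Finset.card_filter]
    rw [Finset.sum_congr rfl (fun g _ => h1 g), Finset.sum_comm]
    refine Finset.sum_congr rfl fun p _ => ?_
    rw [DSC.fib, Finset.card_filter]
  have hEQ : (k + 1) * Q ≤ E.card * E.card := by
    rw [← sq]; exact hE
  have hlow : (k + 1) * Fintype.card G ≤ ∑ p ∈ E ×ˢ E, DSC.fib (s • p.1) p.2 := by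
    by_cases h0 : (0 : Fin d → F) ∈ E
    · set n := (E.erase 0).card with hn
      have hm : E.card = n + 1 := by
        rw [hn, Finset.card_erase_of_mem h0]
        have := Finset.card_pos.mpr ⟨0, h0⟩
        omega
      have inner0 : ∑ y ∈ E, DSC.fib (s • (0 : Fin d → F)) y = Fintype.card G := by
        rw [smul_zero, ← Finset.add_sum_erase _ _ h0, DSC.fib_zero_zero,
          Finset.sum_eq_zero, add_zero]
        intro y hy
        exact DSC.fib_zero_left y (Finset.mem_erase.mp hy).1
      have innerx : ∀ x ∈ E.erase 0, ∑ y ∈ E, DSC.fib (s • x) y = n * c := by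
        intro x hx
        have hsx : s • x ≠ 0 := smul_ne_zero hs (Finset.mem_erase.mp hx).1
        rw [← Finset.add_sum_erase _ _ h0, DSC.fib_zero_right _ hsx, zero_add,
          Finset.sum_congr rfl
            (fun y hy => DSC.fib_congr hd hsx (Finset.mem_erase.mp hy).1 he0ne he0ne),
          Finset.sum_const, smul_eq_mul, ← hn]
      rw [Finset.sum_product, ← Finset.add_sum_erase _ _ h0, inner0,
        Finset.sum_congr rfl innerx, Finset.sum_const, smul_eq_mul, ← hn, hcard]
      -- (k+1) * ((Q-1)*c) ≤ (Q-1)*c + n * (n*c)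
      obtain ⟨P, hP⟩ : ∃ P, Q = P + 1 := ⟨Q - 1, by omega⟩
      have hQP : Q - 1 = P := by omega
      rw [hQP]
      have hE2 : (k + 1) * (P + 1) ≤ (n + 1) * (n + 1) := by
        rw [← hP, ← hm]; exact hEQ
      have key : (k + 1) * P ≤ P + n * n := by
        have h2 : 2 * n * P ≤ n ^ 2 + P ^ 2 := two_mul_le_add_sq n P
        have h3 : (k + 1) * P * (P + 1) ≤ (P + n * n) * (P + 1) := by nlinarith
        exact Nat.le_of_mul_le_mul_right h3 (by omega)
      calc (k + 1) * (P * c) = ((k + 1) * P) * c := by ring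
        _ ≤ (P + n * n) * c := Nat.mul_le_mul_right c key
        _ = P * c + n * (n * c) := by ring
    · have hall : ∀ p ∈ E ×ˢ E, DSC.fib (s • p.1) p.2 = c := by
        intro p hp
        obtain ⟨h1, h2⟩ := Finset.mem_product.mp hp
        exact DSC.fib_congr hd (smul_ne_zero hs (ne_of_mem_of_not_mem h1 h0))
          (ne_of_mem_of_not_mem h2 h0) he0ne he0ne
      rw [Finset.sum_congr rfl hall, Finset.sum_const, Finset.card_product, smul_eq_mul,
        hcard]
      have h1 : (k + 1) * (Q - 1) ≤ E.card * E.card :=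
        le_trans (Nat.mul_le_mul_left _ (Nat.sub_le _ _)) hEQ
      calc (k + 1) * ((Q - 1) * c) = ((k + 1) * (Q - 1)) * c := by ring
        _ ≤ (E.card * E.card) * c := Nat.mul_le_mul_right c h1
  have hex : ∃ g : G, k + 1 ≤ (S g).card := by
    by_contra hcon
    push_neg at hcon
    have h1 : ∑ g : G, (S g).card ≤ ∑ _g : G, k :=
      Finset.sum_le_sum fun g _ => Nat.lt_succ_iff.mp (hcon g)
    rw [Finset.sum_const, Finset.card_univ, smul_eq_mul] at h1
    rw [hsum] at h1
    have := le_trans hlow h1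
    nlinarith
  obtain ⟨g, hg⟩ := hex
  let z : Fin (k + 1) → (Fin d → F) := fun i =>
    ((S g).equivFin.symm ⟨i.1, lt_of_lt_of_le i.isLt hg⟩ : (S g))
  have hzmem : ∀ i, z i ∈ S g := fun i => Subtype.coe_prop _
  have hzinj : Function.Injective z := by
    intro i j h
    have h2 := (S g).equivFin.symm.injective (Subtype.ext h)
    have h3 : i.1 = j.1 := by simpa [Fin.ext_iff] using h2
    exact Fin.ext h3
  have hxe : ∀ i, ∃ a, a ∈ E ∧ (g : Matrix (Fin d) (Fin d) F).mulVec a = z i := by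
    intro i
    have h1 := (Finset.mem_inter.mp (hzmem i)).2
    obtain ⟨a, ha, ha2⟩ := Finset.mem_image.mp h1
    exact ⟨a, ha, ha2⟩
  have hye : ∀ i, ∃ a, a ∈ E ∧ s • a = z i := by
    intro i
    have h1 := (Finset.mem_inter.mp (hzmem i)).1
    obtain ⟨a, ha, ha2⟩ := Finset.mem_image.mp h1
    exact ⟨a, ha, ha2⟩
  choose x hxE hxz using hxe
  choose y hyE hyz using hye
  refine ⟨g, z, hzinj, fun i => hzmem i, x, y, hxE, hyE, ?_⟩
  intro idx
  have key : (g : Matrix (Fin d) (Fin d) F) * (Matrix.of fun a b => x (idx b) a)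
      = s • Matrix.of fun a b => y (idx b) a := by
    ext a b
    have lhs : ((g : Matrix (Fin d) (Fin d) F) * (Matrix.of fun a b => x (idx b) a)) a b
        = ((g : Matrix (Fin d) (Fin d) F).mulVec (x (idx b))) a := by
      simp [Matrix.mul_apply, Matrix.mulVec, dotProduct]
    rw [lhs, hxz (idx b)]
    have rhs : (s • (Matrix.of fun a b => y (idx b) a)) a b = (s • y (idx b)) a := by
      simp [Matrix.smul_apply]
    rw [rhs, hyz (idx b)]
  have hdet := congrArg Matrix.det key
  rw [Matrix.det_mul, Matrix.SpecialLinearGroup.det_coe, one_mul, Matrix.det_smul,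
    Fintype.card_fin] at hdet
  rw [hdet, hr]
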